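/- Let R be a ring, P a maximal two-sided ideal of R, and d ∈ R an element whose image in R/P is a regular element (neither a left nor a right zero-divisor). Let N be an (R,R)-bimodule that is finitely generated as a left R-module and in which every element n satisfies n·d^{j} = 0 for some j ≥ 1 (depending on n). Then there exists a single j ≥ 1 with N·d^{j} = 0. Moreover, if in addition N·P = 0, then N = 0. -/

import Mathlib

open MulOpposite

theorem stmt_11 {R : Type*} [Ring R]
    (P : TwoSidedIdeal R) (hP : IsCoatom P)
    (d : R)
    (hreg₁ : ∀ y : P.ringCon.Quotient, P.ringCon.mk' d * y = 0 → y = 0)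
    (hreg₂ : ∀ y : P.ringCon.Quotient, y * P.ringCon.mk' d = 0 → y = 0)
    (N : Type*) [AddCommGroup N] [Module R N] [Module Rᵐᵒᵖ N] [SMulCommClass R Rᵐᵒᵖ N]
    [Module.Finite R N]
    (htor : ∀ x : N, ∃ j : ℕ, 1 ≤ j ∧ (op d ^ j) • x = 0) :
    (∃ j : ℕ, 1 ≤ j ∧ ∀ x : N, (op d ^ j) • x = 0) ∧
    ((∀ (x : N) (p : R), p ∈ P → op p • x = 0) → ∀ x : N, x = 0) := by
  -- pick exponent for each element
  choose e he1 he2 using htor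
  obtain ⟨s, hs⟩ := Module.Finite.fg_top (R := R) (M := N)
  set J : ℕ := max 1 (s.sup e) with hJ
  have hstep : ∀ (x : N), e x ≤ J → (op d ^ J) • x = 0 := by
    intro x hx
    have : op d ^ J = op d ^ (J - e x) * op d ^ e x := by
      rw [← pow_add]; congr 1; omega
    rw [this, mul_smul, he2, smul_zero]
  have key : ∀ x : N, (op d ^ J) • x = 0 := by
    have : (⊤ : Submodule R N) ≤ LinearMap.ker
        ({ toFun := fun x => (op d ^ J) • x,
           map_add' := fun a b => smul_add _ a b,
           map_smul' := fun r x => by exact (smul_comm r _ x).symm } : N →ₗ[R] N) := by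
      rw [← hs]
      refine Submodule.span_le.2 fun x hx => ?_
      simp only [SetLike.mem_coe, LinearMap.mem_ker, LinearMap.coe_mk, AddHom.coe_mk]
      exact hstep x (le_trans (Finset.le_sup hx) (le_max_right _ _))
    intro x
    simpa using this (Submodule.mem_top : x ∈ ⊤)
  have hJ1 : 1 ≤ J := le_max_left _ _
  refine ⟨⟨J, hJ1, key⟩, ?_⟩
  intro hann
  -- the two-sided annihilator ideal
  set A : TwoSidedIdeal R := TwoSidedIdeal.mk' {r : R | ∀ x : N, op r • x = 0}
    (by intro x; simp)
    (by intro a b ha hb x; rw [op_add, add_smul, ha, hb, add_zero])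
    (by intro a ha x; rw [op_neg, neg_smul, ha, neg_zero])
    (by intro a b hb x; rw [op_mul, mul_smul, hb])
    (by intro a b ha x; rw [op_mul, mul_smul, ha, smul_zero]) with hA
  have hmemA : ∀ r : R, r ∈ A ↔ ∀ x : N, op r • x = 0 := fun r =>
    TwoSidedIdeal.mem_mk' _ _ _ _ _ _ r
  have hPA : P ≤ A := fun r hr => (hmemA r).2 fun x => hann x r hr
  -- d^J ∉ P since mk d is regular and the quotient is nontrivial
  have hone : (1 : P.ringCon.Quotient) ≠ 0 := by
    intro h
    apply hP.1
    rw [eq_top_iff]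
    intro r _
    have h1 : (1 : R) ∈ P := by
      rw [TwoSidedIdeal.mem_iff, ← P.ringCon.eq]
      exact h
    simpa using P.mul_mem_left r 1 h1
  have hpow : ∀ j : ℕ, (P.ringCon.mk' d) ^ j ≠ 0 := by
    intro j
    induction j with
    | zero => simpa using hone
    | succ n ih =>
      intro h
      rw [pow_succ'] at h
      exact ih (hreg₁ _ h)
  have hdJ : d ^ J ∉ P := by
    intro h
    apply hpow J
    rw [← map_pow, ← (P.ringCon.mk' : R →+* _).map_zero]
    exact P.ringCon.eq.2 (by simpa using (TwoSidedIdeal.mem_iff P _).1 h)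
  have hPltA : P < A := lt_of_le_of_ne hPA (by
    intro h
    exact hdJ (h ▸ (hmemA (d ^ J)).2 (by simpa [op_pow] using key)))
  have hAtop : A = ⊤ := hP.2 A hPltA
  intro x
  have h1 : (1 : R) ∈ A := hAtop ▸ TwoSidedIdeal.mem_top R
  have := (hmemA 1).1 h1 x
  simpa using this
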